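/- Let H be a subgroup of (Z/vZ)ˣ and set H* = H ∪ (-1)·H. If X ⊆ Z/vZ is a union of H-orbits and x_i = -1 for i ∈ X, x_i = 1 otherwise, then PSD_X is constant on the orbits of H* acting on Z/vZ by multiplication. -/

import Mathlib

open scoped Classical

noncomputable def PSDZ (v : ℕ) [NeZero v] (x : ZMod v → ℝ) (k : ZMod v) : ℝ :=
  ‖(∑ α : ZMod v, (x α : ℂ)
    * Complex.exp (2 * (Real.pi : ℂ) * Complex.I * ((α * k).val : ℕ) / v))‖ ^ 2

noncomputable def TZ (v : ℕ) [NeZero v] (x : ZMod v → ℝ) (k : ZMod v) : ℂ :=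
  ∑ α : ZMod v, (x α : ℂ)
    * Complex.exp (2 * (Real.pi : ℂ) * Complex.I * ((α * k).val : ℕ) / v)

lemma PSDZ_eq_TZ (v : ℕ) [NeZero v] (x : ZMod v → ℝ) (k : ZMod v) :
    PSDZ v x k = ‖TZ v x k‖ ^ 2 := rfl

lemma expZ_neg (v : ℕ) [NeZero v] (m : ZMod v) :
    Complex.exp (2 * (Real.pi : ℂ) * Complex.I * (((-m).val : ℕ) : ℂ) / v)
      = (starRingEnd ℂ) (Complex.exp (2 * (Real.pi : ℂ) * Complex.I * ((m.val : ℕ) : ℂ) / v)) := by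
  have hv : (v : ℂ) ≠ 0 := Nat.cast_ne_zero.mpr (NeZero.ne v)
  rw [← Complex.exp_conj]
  have hc : (starRingEnd ℂ) (2 * (Real.pi : ℂ) * Complex.I * ((m.val : ℕ) : ℂ) / v)
      = -(2 * (Real.pi : ℂ) * Complex.I * ((m.val : ℕ) : ℂ) / v) := by
    simp only [map_div₀, map_mul, map_ofNat, Complex.conj_ofReal, Complex.conj_I,
      Complex.conj_natCast]
    ring
  rw [hc]
  by_cases hm : m = 0
  · simp [hm]
  · have hval : ((-m).val : ℂ) = (v : ℂ) - (m.val : ℂ) := by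
      rw [ZMod.neg_val, if_neg hm]
      have : m.val ≤ v := le_of_lt (ZMod.val_lt m)
      push_cast [this]
      ring
    rw [hval]
    have h2 : 2 * (Real.pi : ℂ) * Complex.I * ((v : ℂ) - (m.val : ℂ)) / v
        = 2 * (Real.pi : ℂ) * Complex.I + -(2 * (Real.pi : ℂ) * Complex.I * ((m.val : ℕ) : ℂ) / v) := by
      field_simp
      ring
    rw [h2, Complex.exp_add, Complex.exp_two_pi_mul_I, one_mul]

lemma TZ_mul (v : ℕ) [NeZero v] (H : Subgroup (ZMod v)ˣ)
    (X : Set (ZMod v))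
    (hX : ∀ α : ZMod v, ∀ s ∈ H, ((s : (ZMod v)ˣ) : ZMod v) * α ∈ X ↔ α ∈ X)
    (x : ZMod v → ℝ) (hx : ∀ i, x i = if i ∈ X then -1 else 1)
    (s : (ZMod v)ˣ) (hs : s ∈ H) (k : ZMod v) :
    TZ v x (k * ((s : (ZMod v)ˣ) : ZMod v)) = TZ v x k := by
  unfold TZ
  have hbij : Function.Bijective (fun α : ZMod v => ((s⁻¹ : (ZMod v)ˣ) : ZMod v) * α) :=
    (Units.mulLeft (s⁻¹ : (ZMod v)ˣ)).bijective
  refine (Fintype.sum_bijective _ hbij _ _ ?_).symm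
  intro α
  have h1 : ((s⁻¹ : (ZMod v)ˣ) : ZMod v) * α * (k * ((s : (ZMod v)ˣ) : ZMod v)) = α * k := by
    have : ((s⁻¹ : (ZMod v)ˣ) : ZMod v) * ((s : (ZMod v)ˣ) : ZMod v) = 1 := by
      rw [← Units.val_mul]; simp
    calc ((s⁻¹ : (ZMod v)ˣ) : ZMod v) * α * (k * ((s : (ZMod v)ˣ) : ZMod v))
        = (((s⁻¹ : (ZMod v)ˣ) : ZMod v) * ((s : (ZMod v)ˣ) : ZMod v)) * (α * k) := by ring
      _ = α * k := by rw [this, one_mul]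
  have h2 : x (((s⁻¹ : (ZMod v)ˣ) : ZMod v) * α) = x α := by
    rw [hx, hx]
    simp [hX α s⁻¹ (inv_mem hs)]
  rw [h1, h2]

lemma TZ_neg (v : ℕ) [NeZero v] (x : ZMod v → ℝ) (k : ZMod v) :
    TZ v x (-k) = (starRingEnd ℂ) (TZ v x k) := by
  unfold TZ
  rw [map_sum]
  refine Finset.sum_congr rfl fun α _ => ?_
  rw [map_mul, Complex.conj_ofReal, ← expZ_neg]
  congr 2
  ring

/-- If `X ⊆ Z/vZ` is a union of `H`-orbits and `x_i = ±1` according to membership in `X`,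
then the power spectral density is constant on orbits of `H* = H ∪ (-1)H`. -/
theorem stmt14 (v : ℕ) [NeZero v] (H : Subgroup (ZMod v)ˣ)
    (X : Set (ZMod v))
    (hX : ∀ α : ZMod v, ∀ s ∈ H, ((s : (ZMod v)ˣ) : ZMod v) * α ∈ X ↔ α ∈ X)
    (x : ZMod v → ℝ) (hx : ∀ i, x i = if i ∈ X then -1 else 1)
    (k k' : ZMod v)
    (horb : ∃ s : (ZMod v)ˣ, (s ∈ H ∨ -s ∈ H) ∧ k' = k * ((s : (ZMod v)ˣ) : ZMod v)) :
    PSDZ v x k = PSDZ v x k' := by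
  obtain ⟨s, hs | hs, rfl⟩ := horb
  · rw [PSDZ_eq_TZ, PSDZ_eq_TZ, TZ_mul v H X hX x hx s hs k]
  · have h1 : k * ((s : (ZMod v)ˣ) : ZMod v) = (-k) * (((-s) : (ZMod v)ˣ) : ZMod v) := by
      rw [Units.val_neg]; ring
    rw [PSDZ_eq_TZ, PSDZ_eq_TZ, h1, TZ_mul v H X hX x hx (-s) hs (-k), TZ_neg]
    rw [Complex.norm_conj]
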